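/- For any N, d_x ∈ ℕ with N, d_x ≥ 1 and any set X ⊂ ℝ^{d_x} with |X| = N, there exists a unit vector u ∈ ℝ^{d_x} (‖u‖₂ = 1) such that for all x, x′ ∈ X: (1/N²)·√(8/(π d_x))·‖x − x′‖₂ ≤ |uᵀ(x − x′)| ≤ ‖x − x′‖₂. -/

import Mathlib

open Real Filter

noncomputable section

/-- A sigmoidal activation function. -/
def Sigmoidal (σ : ℝ → ℝ) : Prop :=
  (∃ a b : ℝ, Tendsto σ atBot (nhds a) ∧ Tendsto σ atTop (nhds b) ∧ a ≠ b) ∧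
  (∃ z : ℝ, ContDiffAt ℝ 1 σ z ∧ deriv σ z ≠ 0)

/-- `f` is an affine map between finite-dimensional coordinate spaces. -/
def IsAffineVecMap {m n : ℕ} (t : (Fin m → ℝ) → (Fin n → ℝ)) : Prop :=
  ∃ (W : Matrix (Fin n) (Fin m) ℝ) (b : Fin n → ℝ), ∀ x, t x = W.mulVec x + b

/-- A `σ` network with hidden layer widths `ws`. -/
def IsNet (σ : ℝ → ℝ) : (din : ℕ) → (ws : List ℕ) → (dout : ℕ) →
    ((Fin din → ℝ) → (Fin dout → ℝ)) → Prop
  | _, [], _, f => IsAffineVecMap f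
  | din, d :: ds, dout, f =>
      ∃ (t : (Fin din → ℝ) → (Fin d → ℝ)) (g : (Fin d → ℝ) → (Fin dout → ℝ)),
        IsAffineVecMap t ∧ IsNet σ d ds dout g ∧ ∀ x, f x = g (fun i => σ (t x i))

/-- The binary threshold (step) function. -/
def stepFun (x : ℝ) : ℝ := if 0 ≤ x then 1 else 0

/-- A `Step`+`Id` network: each hidden neuron applies either `Step` or `Id`. -/
def IsStepIdNet : (din : ℕ) → (ws : List ℕ) → (dout : ℕ) →
    ((Fin din → ℝ) → (Fin dout → ℝ)) → Prop
  | _, [], _, f => IsAffineVecMap f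
  | din, d :: ds, dout, f =>
      ∃ (t : (Fin din → ℝ) → (Fin d → ℝ)) (φ : Fin d → Bool)
        (g : (Fin d → ℝ) → (Fin dout → ℝ)),
        IsAffineVecMap t ∧ IsStepIdNet d ds dout g ∧
        ∀ x, f x = g (fun i => if φ i then stepFun (t x i) else t x i)

/-- Number of parameters `Σ_ℓ d_{ℓ+1}(d_ℓ + 1)`. -/
def paramCount : (din : ℕ) → (ws : List ℕ) → (dout : ℕ) → ℕ
  | din, [], dout => dout * (din + 1)
  | din, d :: ds, dout => d * (din + 1) + paramCount d ds dout

/-- Euclidean norm on `Fin d → ℝ`. -/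
def eNorm {d : ℕ} (x : Fin d → ℝ) : ℝ := Real.sqrt (∑ i, (x i) ^ 2)

/-- Euclidean inner product. -/
def eDot {d : ℕ} (u v : Fin d → ℝ) : ℝ := ∑ i, u i * v i

/-- A finite set is `Δ`-separated: the largest pairwise distance is less than
`Δ` times the smallest pairwise distance. -/
def Separated (Δ : ℝ) {d : ℕ} (X : Finset (Fin d → ℝ)) : Prop :=
  ∀ x ∈ X, ∀ x' ∈ X, ∀ z ∈ X, ∀ z' ∈ X, x ≠ x' → z ≠ z' →
    eNorm (x - x') < Δ * eNorm (z - z')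

section AuxForStatement4

open MeasureTheory Metric

lemma aux_gautschi {x : ℝ} (hx : 0 < x) :
    Real.Gamma (x + 1/2) ≤ Real.sqrt x * Real.Gamma x := by
  have hx1 : (0:ℝ) < x + 1 := by linarith
  have h := Real.convexOn_log_Gamma.2 (Set.mem_Ioi.mpr hx) (Set.mem_Ioi.mpr hx1)
      (by norm_num : (0:ℝ) ≤ 1/2) (by norm_num : (0:ℝ) ≤ 1/2) (by norm_num : (1:ℝ)/2 + 1/2 = 1)
  have harg : (1/2 : ℝ) • x + (1/2 : ℝ) • (x+1) = x + 1/2 := by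
    simp only [smul_eq_mul]; ring
  rw [harg] at h
  simp only [Function.comp_apply, smul_eq_mul] at h
  have hg : 0 < Real.Gamma x := Real.Gamma_pos_of_pos hx
  have hg1 : 0 < Real.Gamma (x+1) := Real.Gamma_pos_of_pos hx1
  have hg2 : 0 < Real.Gamma (x + 1/2) := Real.Gamma_pos_of_pos (by linarith)
  have hsq : Real.Gamma (x + 1/2) ^ 2 ≤ x * Real.Gamma x ^ 2 := by
    have h2 : Real.log (Real.Gamma (x+1/2) ^ 2) ≤ Real.log (Real.Gamma x * Real.Gamma (x+1)) := by
      rw [Real.log_pow, Real.log_mul (ne_of_gt hg) (ne_of_gt hg1)]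
      push_cast
      linarith
    have h3 := Real.exp_le_exp.mpr h2
    rw [Real.exp_log (by positivity), Real.exp_log (by positivity)] at h3
    calc Real.Gamma (x + 1/2) ^ 2 ≤ Real.Gamma x * Real.Gamma (x+1) := h3
      _ = x * Real.Gamma x ^ 2 := by rw [Real.Gamma_add_one (ne_of_gt hx)]; ring
  have hb : (0:ℝ) ≤ Real.sqrt x * Real.Gamma x := by positivity
  calc Real.Gamma (x + 1/2) = Real.sqrt (Real.Gamma (x + 1/2) ^ 2) := by
        rw [Real.sqrt_sq hg2.le]
    _ ≤ Real.sqrt ((Real.sqrt x * Real.Gamma x) ^ 2) := by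
        apply Real.sqrt_le_sqrt
        rw [mul_pow, Real.sq_sqrt hx.le]
        exact hsq
    _ = Real.sqrt x * Real.Gamma x := Real.sqrt_sq hb

lemma aux_norm_le_one_iff {k : ℕ} (y : EuclideanSpace ℝ (Fin k)) :
    ‖y‖ ≤ 1 ↔ ∑ i, (y i)^2 ≤ 1 := by
  rw [EuclideanSpace.norm_eq]
  simp_rw [Real.norm_eq_abs, sq_abs]
  constructor
  · intro h
    have h0 : (0:ℝ) ≤ ∑ i, (y i)^2 := Finset.sum_nonneg fun i _ => sq_nonneg _
    nlinarith [Real.sq_sqrt h0, Real.sqrt_nonneg (∑ i, (y i)^2)]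
  · intro h
    calc Real.sqrt (∑ i, (y i)^2) ≤ Real.sqrt 1 := Real.sqrt_le_sqrt h
      _ = 1 := Real.sqrt_one

lemma aux_ballvol (k : ℕ) :
    volume (closedBall (0 : EuclideanSpace ℝ (Fin k)) 1) =
      ENNReal.ofReal (Real.sqrt π ^ k / Real.Gamma (k / 2 + 1)) := by
  rcases Nat.eq_zero_or_pos k with rfl | hk
  · rw [volume_euclideanSpace_eq_dirac]
    rw [Measure.dirac_apply' _ measurableSet_closedBall]
    simp [Real.Gamma_one, Set.indicator_of_mem (mem_closedBall_self zero_le_one)]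
  · have : Nonempty (Fin k) := Fin.pos_iff_nonempty.mp hk
    simpa [Fintype.card_fin] using
      EuclideanSpace.volume_closedBall (Fin k) (0 : EuclideanSpace ℝ (Fin k)) 1

lemma aux_slab (n : ℕ) (w : EuclideanSpace ℝ (Fin (n+1))) (hw : ‖w‖ = 1) {a : ℝ} (ha : 0 ≤ a) :
    volume {g : EuclideanSpace ℝ (Fin (n+1)) | |(inner ℝ w g : ℝ)| ≤ a ∧ ‖g‖ ≤ 1} ≤
      ENNReal.ofReal (2*a) * volume (closedBall (0 : EuclideanSpace ℝ (Fin n)) 1) := by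
  classical
  have horth : Orthonormal ℝ (({0} : Set (Fin (n+1))).restrict (fun _ => w)) := by
    constructor
    · intro i; exact hw
    · intro i j hij
      exact absurd (Subsingleton.elim i j) hij
  obtain ⟨b, hb⟩ := horth.exists_orthonormalBasis_extension_of_card_eq (by simp)
  have hb0 : b 0 = w := hb 0 rfl
  set A : Set (EuclideanSpace ℝ (Fin (n+1))) := {y | |y 0| ≤ a ∧ ‖y‖ ≤ 1} with hA
  have hAm : MeasurableSet A := by
    apply IsClosed.measurableSet
    apply IsClosed.inter
    · exact isClosed_le ((PiLp.continuous_apply 2 _ (0 : Fin (n+1))).abs) continuous_const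
    · exact isClosed_le continuous_norm continuous_const
  have h1 : {g : EuclideanSpace ℝ (Fin (n+1)) | |(inner ℝ w g : ℝ)| ≤ a ∧ ‖g‖ ≤ 1}
      = b.repr ⁻¹' A := by
    ext g
    simp only [Set.mem_setOf_eq, Set.mem_preimage, hA]
    rw [b.repr.norm_map, OrthonormalBasis.repr_apply_apply, hb0]
  rw [h1, (b.measurePreserving_repr).measure_preimage hAm.nullMeasurableSet]
  -- now A in EuclideanSpace; move to pi
  set A2 : Set (Fin (n+1) → ℝ) := {x | |x 0| ≤ a ∧ ∑ i, (x i)^2 ≤ 1} with hA2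
  have hA2m : MeasurableSet A2 := by
    apply IsClosed.measurableSet
    apply IsClosed.inter
    · exact isClosed_le ((continuous_apply (0 : Fin (n+1))).abs) continuous_const
    · exact isClosed_le (continuous_finset_sum _ fun i _ => (continuous_apply i).pow 2)
        continuous_const
  have h2 : A = ((MeasurableEquiv.toLp 2 (Fin (n+1) → ℝ)).symm) ⁻¹' A2 := by
    ext y
    simp only [Set.mem_setOf_eq, Set.mem_preimage, hA, hA2,
      MeasurableEquiv.toLp_symm_apply]
    rw [aux_norm_le_one_iff]
  rw [h2, (EuclideanSpace.volume_preserving_symm_measurableEquiv_toLp (Fin (n+1))).measure_preimage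
    hA2m.nullMeasurableSet]
  -- split off coordinate 0
  set B : Set (Fin n → ℝ) := {z | ∑ j, (z j)^2 ≤ 1} with hB
  have hBm : MeasurableSet B := by
    apply IsClosed.measurableSet
    exact isClosed_le (continuous_finset_sum _ fun i _ => (continuous_apply i).pow 2)
      continuous_const
  have h3 : A2 ⊆ (MeasurableEquiv.piFinSuccAbove (fun _ : Fin (n+1) => ℝ) 0) ⁻¹'
      ((Set.Icc (-a) a) ×ˢ B) := by
    rintro x ⟨hx1, hx2⟩
    simp only [Set.mem_preimage, MeasurableEquiv.piFinSuccAbove_apply, Set.mem_prod,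
      Set.mem_Icc, hB, Set.mem_setOf_eq]
    refine ⟨abs_le.mp hx1, ?_⟩
    have hsum := Fin.sum_univ_succAbove (fun i => (x i)^2) 0
    have : ∑ j : Fin n, (x ((0:Fin (n+1)).succAbove j))^2 ≤ ∑ i, (x i)^2 := by
      rw [hsum]; nlinarith [sq_nonneg (x 0)]
    calc ∑ j : Fin n, ((Fin.removeNth 0 x) j)^2
        = ∑ j : Fin n, (x ((0:Fin (n+1)).succAbove j))^2 := rfl
      _ ≤ 1 := le_trans this hx2
  calc volume A2 ≤ volume ((MeasurableEquiv.piFinSuccAbove (fun _ : Fin (n+1) => ℝ) 0) ⁻¹'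
      ((Set.Icc (-a) a) ×ˢ B)) := measure_mono h3
    _ = volume ((Set.Icc (-a) a) ×ˢ B) := by
        rw [(volume_preserving_piFinSuccAbove (fun _ : Fin (n+1) => ℝ) 0).measure_preimage
          ((measurableSet_Icc.prod hBm).nullMeasurableSet)]
    _ = volume (Set.Icc (-a) a) * volume B := by
        rw [Measure.volume_eq_prod, Measure.prod_prod]
    _ = ENNReal.ofReal (2*a) * volume B := by
        rw [Real.volume_Icc]
        norm_num
        ring_nf
        rw [ENNReal.ofReal_mul' (by norm_num), ENNReal.ofReal_ofNat]; ring
    _ = ENNReal.ofReal (2*a) * volume (closedBall (0 : EuclideanSpace ℝ (Fin n)) 1) := by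
        congr 1
        rw [← (EuclideanSpace.volume_preserving_symm_measurableEquiv_toLp (Fin n)).measure_preimage
          hBm.nullMeasurableSet]
        congr 1
        ext z
        simp only [Set.mem_preimage, hB, Set.mem_setOf_eq, mem_closedBall_zero_iff,
          MeasurableEquiv.toLp_symm_apply]
        rw [aux_norm_le_one_iff]


lemma aux_key (N n : ℕ) (hN : 1 ≤ N) (Y : Finset (EuclideanSpace ℝ (Fin (n+1))))
    (hY : Y.card = N) :
    ∃ u : EuclideanSpace ℝ (Fin (n+1)), ‖u‖ = 1 ∧ ∀ x ∈ Y, ∀ x' ∈ Y,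
      (1 / (N:ℝ)^2) * Real.sqrt (8 / (π * ((n:ℝ)+1))) * ‖x - x'‖ ≤
        |(inner ℝ u (x - x') : ℝ)| := by
  classical
  set c : ℝ := Real.sqrt (8 / (π * ((n:ℝ)+1))) with hc
  set ε : ℝ := (1 / (N:ℝ)^2) * c with hεdef
  have hπ : (3:ℝ) < π := Real.pi_gt_three
  have hcpos : 0 < c := Real.sqrt_pos.mpr (by positivity)
  have hNpos : (0:ℝ) < (N:ℝ) := by exact_mod_cast Nat.lt_of_lt_of_le Nat.zero_lt_one hN
  have hε0 : 0 ≤ ε := by positivity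
  set e : ↥Y ≃ Fin N := Fintype.equivFinOfCardEq (by rw [Fintype.card_coe, hY]) with he
  set f : Fin N → EuclideanSpace ℝ (Fin (n+1)) := fun i => ((e.symm i : ↥Y) : _) with hf
  have hfinj : Function.Injective f := fun i j h => e.symm.injective (Subtype.coe_injective h)
  set S : Finset (Fin N × Fin N) := Finset.univ.filter (fun p => p.1 < p.2) with hS
  set Bad : Fin N × Fin N → Set (EuclideanSpace ℝ (Fin (n+1))) :=
    fun p => {g | |(inner ℝ g (f p.1 - f p.2) : ℝ)| ≤ ε * ‖f p.1 - f p.2‖ * ‖g‖} with hBad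
  set cb := closedBall (0 : EuclideanSpace ℝ (Fin (n+1))) 1 with hcb
  set Vn := volume (closedBall (0 : EuclideanSpace ℝ (Fin n)) 1) with hVn
  -- per-pair bound
  have hpair : ∀ p ∈ S, volume (cb ∩ Bad p) ≤ ENNReal.ofReal (2*ε) * Vn := by
    intro p hp
    have hne : p.1 ≠ p.2 := ne_of_lt (Finset.mem_filter.mp hp).2
    have hv : f p.1 - f p.2 ≠ 0 := sub_ne_zero.mpr (fun h => hne (hfinj h))
    have hvn : (0:ℝ) < ‖f p.1 - f p.2‖ := norm_pos_iff.mpr hv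
    set v := f p.1 - f p.2 with hvdef
    set w := (‖v‖⁻¹ : ℝ) • v with hw
    have hw1 : ‖w‖ = 1 := norm_smul_inv_norm hv
    have hsub : cb ∩ Bad p ⊆ {g | |(inner ℝ w g : ℝ)| ≤ ε ∧ ‖g‖ ≤ 1} := by
      rintro g ⟨hg1, hg2⟩
      have hgn : ‖g‖ ≤ 1 := by
        rw [hcb, mem_closedBall, dist_zero_right] at hg1; exact hg1
      have hg2' : |(inner ℝ g v : ℝ)| ≤ ε * ‖v‖ * ‖g‖ := hg2
      refine ⟨?_, hgn⟩
      have hin : (inner ℝ w g : ℝ) = ‖v‖⁻¹ * (inner ℝ v g : ℝ) := real_inner_smul_left _ _ _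
      rw [hin, abs_mul, abs_inv, abs_norm, real_inner_comm]
      calc ‖v‖⁻¹ * |(inner ℝ g v : ℝ)| ≤ ‖v‖⁻¹ * (ε * ‖v‖ * ‖g‖) :=
            mul_le_mul_of_nonneg_left hg2' (inv_nonneg.mpr hvn.le)
        _ = ε * ‖g‖ * (‖v‖⁻¹ * ‖v‖) := by ring
        _ = ε * ‖g‖ := by rw [inv_mul_cancel₀ (ne_of_gt hvn), mul_one]
        _ ≤ ε * 1 := mul_le_mul_of_nonneg_left hgn hε0
        _ = ε := mul_one ε
    calc volume (cb ∩ Bad p) ≤ volume {g | |(inner ℝ w g : ℝ)| ≤ ε ∧ ‖g‖ ≤ 1} :=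
          measure_mono hsub
      _ ≤ ENNReal.ofReal (2*ε) * Vn := aux_slab n w hw1 hε0
  -- counting
  have hcard2 : 2 * S.card ≤ N * N := by
    have hswap : S.card = (Finset.univ.filter (fun p : Fin N × Fin N => p.2 < p.1)).card := by
      apply Finset.card_bij (fun p _ => (p.2, p.1))
      · intro p hp
        simp only [hS, Finset.mem_filter, Finset.mem_univ, true_and] at hp ⊢
        exact hp
      · intro p hp q hq h
        have h1 : p.2 = q.2 := congrArg Prod.fst h
        have h2 : p.1 = q.1 := congrArg Prod.snd h
        exact Prod.ext h2 h1
      · intro q hq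
        simp only [Finset.mem_filter, Finset.mem_univ, true_and] at hq
        exact ⟨(q.2, q.1), by simp [hS, hq], rfl⟩
    have hdisj : Disjoint S (Finset.univ.filter (fun p : Fin N × Fin N => p.2 < p.1)) := by
      rw [Finset.disjoint_left]
      intro p hp hp'
      simp only [hS, Finset.mem_filter, Finset.mem_univ, true_and] at hp hp'
      exact absurd hp' (lt_asymm hp)
    have hle := Finset.card_le_univ
      (S ∪ Finset.univ.filter (fun p : Fin N × Fin N => p.2 < p.1))
    rw [Finset.card_union_of_disjoint hdisj] at hle
    simp only [Finset.card_univ, Fintype.card_prod, Fintype.card_fin] at hle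
    omega
  -- volumes
  have hVnval : Vn = ENNReal.ofReal (Real.sqrt π ^ n / Real.Gamma ((n:ℝ) / 2 + 1)) := by
    rw [hVn, aux_ballvol n]
  have hVdval : volume cb =
      ENNReal.ofReal (Real.sqrt π ^ (n+1) / Real.Gamma ((↑(n+1):ℝ) / 2 + 1)) := by
    rw [hcb, aux_ballvol (n+1)]
  set vn : ℝ := Real.sqrt π ^ n / Real.Gamma ((n:ℝ) / 2 + 1) with hvn
  set vd : ℝ := Real.sqrt π ^ (n+1) / Real.Gamma ((↑(n+1):ℝ) / 2 + 1) with hvd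
  have hΓn : 0 < Real.Gamma ((n:ℝ)/2+1) := Real.Gamma_pos_of_pos (by positivity)
  have hΓd : 0 < Real.Gamma ((↑(n+1):ℝ)/2+1) := Real.Gamma_pos_of_pos (by positivity)
  have hπ0 : (0:ℝ) < π := by linarith
  have hsπ : 0 < Real.sqrt π := Real.sqrt_pos.mpr hπ0
  have hvd0 : 0 < vd := by rw [hvd]; positivity
  have hvn0 : 0 ≤ vn := by rw [hvn]; positivity
  -- real inequality
  have hkey : (S.card : ℝ) * (2*ε) * vn < vd := by
    have hG : Real.Gamma ((↑(n+1):ℝ)/2 + 1) ≤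
        Real.sqrt ((n:ℝ)/2+1) * Real.Gamma ((n:ℝ)/2+1) := by
      have h := aux_gautschi (x := (n:ℝ)/2+1) (by positivity)
      have harg : (n:ℝ)/2 + 1 + 1/2 = (↑(n+1):ℝ)/2 + 1 := by push_cast; ring
      rwa [harg] at h
    have hcx : c * Real.sqrt ((n:ℝ)/2+1) < Real.sqrt π := by
      rw [Real.lt_sqrt (by positivity)]
      rw [mul_pow, hc, Real.sq_sqrt (by positivity), Real.sq_sqrt (by positivity)]
      rw [div_mul_eq_mul_div, div_lt_iff₀ (by positivity)]
      have hn0 : (0:ℝ) ≤ (n:ℝ) := Nat.cast_nonneg n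
      have h9 : (9:ℝ) < π*π := by nlinarith
      nlinarith [mul_le_mul_of_nonneg_right h9.le (by linarith : (0:ℝ) ≤ (n:ℝ)+1)]
    have hSc : (S.card:ℝ) * (2*ε) ≤ c := by
      have h2 : ((2 * S.card : ℕ):ℝ) ≤ ((N * N : ℕ):ℝ) := by exact_mod_cast hcard2
      push_cast at h2
      have hEq : (S.card:ℝ) * (2*ε) = (2*(S.card:ℝ)) * ((1/(N:ℝ)^2) * c) := by
        rw [hεdef]; ring
      rw [hEq]
      calc (2*(S.card:ℝ)) * ((1/(N:ℝ)^2) * c) ≤ ((N:ℝ)*N) * ((1/(N:ℝ)^2) * c) := by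
            apply mul_le_mul_of_nonneg_right h2 (by positivity)
        _ = c := by field_simp
    have hcvn : c * vn < vd := by
      have h1 : c * vn * Real.Gamma ((↑(n+1):ℝ)/2+1) < vd * Real.Gamma ((↑(n+1):ℝ)/2+1) := by
        have hvdG : vd * Real.Gamma ((↑(n+1):ℝ)/2+1) = Real.sqrt π ^ (n+1) := by
          rw [hvd]; field_simp
        rw [hvdG]
        calc c * vn * Real.Gamma ((↑(n+1):ℝ)/2+1)
            ≤ c * vn * (Real.sqrt ((n:ℝ)/2+1) * Real.Gamma ((n:ℝ)/2+1)) :=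
              mul_le_mul_of_nonneg_left hG (mul_nonneg hcpos.le hvn0)
          _ = (c * Real.sqrt ((n:ℝ)/2+1)) * Real.sqrt π ^ n := by
              rw [hvn]; field_simp
          _ < Real.sqrt π * Real.sqrt π ^ n := mul_lt_mul_of_pos_right hcx (by positivity)
          _ = Real.sqrt π ^ (n+1) := by ring
      exact lt_of_mul_lt_mul_right h1 hΓd.le
    calc (S.card : ℝ) * (2*ε) * vn ≤ c * vn := mul_le_mul_of_nonneg_right hSc hvn0
      _ < vd := hcvn
  -- ENNReal assembly
  have hmain : (S.card : ENNReal) * (ENNReal.ofReal (2*ε) * Vn) < volume cb := by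
    rw [hVnval, hVdval,
      ← ENNReal.ofReal_mul (mul_nonneg (by norm_num : (0:ℝ) ≤ 2) hε0),
      ← ENNReal.ofReal_natCast S.card,
      ← ENNReal.ofReal_mul (Nat.cast_nonneg S.card)]
    rw [ENNReal.ofReal_lt_ofReal_iff hvd0]
    calc (S.card:ℝ) * (2*ε*vn) = (S.card:ℝ) * (2*ε) * vn := by ring
      _ < vd := hkey
  -- bad union and zero set
  have hzero : volume ({0} : Set (EuclideanSpace ℝ (Fin (n+1)))) = 0 := by
    have hw0 : ‖(EuclideanSpace.single (0 : Fin (n+1)) (1:ℝ))‖ = 1 := by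
      rw [EuclideanSpace.norm_single]; norm_num
    have hsub : ({0} : Set (EuclideanSpace ℝ (Fin (n+1)))) ⊆
        {g : EuclideanSpace ℝ (Fin (n+1)) |
          |(inner ℝ (EuclideanSpace.single (0 : Fin (n+1)) (1:ℝ)) g : ℝ)| ≤ 0 ∧ ‖g‖ ≤ 1} := by
      rintro g rfl
      constructor
      · rw [inner_zero_right]; simp
      · simp
    have h := le_trans (measure_mono hsub) (aux_slab n _ hw0 le_rfl)
    simpa using h
  set U : Set (EuclideanSpace ℝ (Fin (n+1))) := ⋃ p ∈ S, Bad p with hU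
  have hA : volume (cb ∩ (U ∪ {0})) < volume cb := by
    have hsub : cb ∩ (U ∪ {0}) ⊆ (⋃ p ∈ S, cb ∩ Bad p) ∪ {0} := by
      rintro g ⟨hg1, hg2 | hg3⟩
      · obtain ⟨p, hp, hgp⟩ := Set.mem_iUnion₂.mp hg2
        exact Or.inl (Set.mem_iUnion₂.mpr ⟨p, hp, ⟨hg1, hgp⟩⟩)
      · exact Or.inr hg3
    calc volume (cb ∩ (U ∪ {0})) ≤ volume ((⋃ p ∈ S, cb ∩ Bad p) ∪ {0}) := measure_mono hsub
      _ ≤ volume (⋃ p ∈ S, cb ∩ Bad p) + volume ({0} : Set (EuclideanSpace ℝ (Fin (n+1)))) :=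
          measure_union_le _ _
      _ = volume (⋃ p ∈ S, cb ∩ Bad p) := by rw [hzero, add_zero]
      _ ≤ ∑ p ∈ S, volume (cb ∩ Bad p) := measure_biUnion_finset_le S _
      _ ≤ S.card • (ENNReal.ofReal (2*ε) * Vn) := Finset.sum_le_card_nsmul S _ _ hpair
      _ = (S.card : ENNReal) * (ENNReal.ofReal (2*ε) * Vn) := by rw [nsmul_eq_mul]
      _ < volume cb := hmain
  have hne : (cb \ (U ∪ {0})).Nonempty := by
    rw [Set.nonempty_iff_ne_empty]
    intro hempty
    have h0 : volume (cb \ (U ∪ {0})) = 0 := by rw [hempty]; exact measure_empty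
    have hle := measure_le_inter_add_diff volume cb (U ∪ {0})
    rw [h0, add_zero] at hle
    exact absurd (lt_of_le_of_lt hle hA) (lt_irrefl _)
  obtain ⟨g, hgcb, hgA⟩ := hne
  have hgU : g ∉ U := fun h => hgA (Or.inl h)
  have hg0 : g ≠ 0 := fun h => hgA (Or.inr (by rw [h]; exact rfl))
  have hgn : (0:ℝ) < ‖g‖ := norm_pos_iff.mpr hg0
  refine ⟨(‖g‖⁻¹ : ℝ) • g, norm_smul_inv_norm hg0, ?_⟩
  intro x hx x' hx'
  by_cases hxx : x = x'
  · subst hxx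
    simp [sub_self, inner_zero_right]
  · set i := e ⟨x, hx⟩ with hi
    set j := e ⟨x', hx'⟩ with hj
    have hfi : f i = x := by rw [hf]; simp [hi]
    have hfj : f j = x' := by rw [hf]; simp [hj]
    have hij : i ≠ j := by
      intro h
      apply hxx
      have := e.injective h
      exact congrArg Subtype.val this
    have hmain2 : ε * ‖x - x'‖ * ‖g‖ < |(inner ℝ g (x - x') : ℝ)| := by
      rcases lt_or_gt_of_ne hij with h | h
      · have hpS : (i,j) ∈ S := by
          rw [hS]; simp only [Finset.mem_filter, Finset.mem_univ, true_and]; exact h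
        have hnb : g ∉ Bad (i,j) := fun hb => hgU (Set.mem_iUnion₂.mpr ⟨(i,j), hpS, hb⟩)
        simp only [hBad, Set.mem_setOf_eq, not_le] at hnb
        rwa [hfi, hfj] at hnb
      · have hpS : (j,i) ∈ S := by
          rw [hS]; simp only [Finset.mem_filter, Finset.mem_univ, true_and]; exact h
        have hnb : g ∉ Bad (j,i) := fun hb => hgU (Set.mem_iUnion₂.mpr ⟨(j,i), hpS, hb⟩)
        simp only [hBad, Set.mem_setOf_eq, not_le] at hnb
        rw [hfi, hfj] at hnb
        calc ε * ‖x - x'‖ * ‖g‖ = ε * ‖x' - x‖ * ‖g‖ := by rw [norm_sub_rev]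
          _ < |(inner ℝ g (x' - x) : ℝ)| := hnb
          _ = |(inner ℝ g (x - x') : ℝ)| := by
              rw [show x' - x = -(x - x') from (neg_sub x x').symm, inner_neg_right, abs_neg]
    have habs : |(inner ℝ ((‖g‖⁻¹:ℝ) • g) (x - x') : ℝ)| = ‖g‖⁻¹ * |(inner ℝ g (x - x') : ℝ)| := by
      rw [real_inner_smul_left, abs_mul, abs_inv, abs_norm]
    rw [habs]
    calc ε * ‖x - x'‖ = ‖g‖⁻¹ * (ε * ‖x - x'‖ * ‖g‖) := by
          field_simp
      _ ≤ ‖g‖⁻¹ * |(inner ℝ g (x - x') : ℝ)| :=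
          mul_le_mul_of_nonneg_left hmain2.le (inv_nonneg.mpr hgn.le)

lemma aux_eNorm {k : ℕ} (v : Fin k → ℝ) :
    eNorm v = ‖(WithLp.equiv 2 (Fin k → ℝ)).symm v‖ := by
  rw [EuclideanSpace.norm_eq]
  simp only [eNorm, WithLp.equiv_symm_apply, PiLp.toLp_apply, Real.norm_eq_abs, sq_abs]

lemma aux_eDot {k : ℕ} (u v : Fin k → ℝ) :
    eDot u v = (inner ℝ ((WithLp.equiv 2 (Fin k → ℝ)).symm u)
      ((WithLp.equiv 2 (Fin k → ℝ)).symm v) : ℝ) := by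
  simp only [eDot, PiLp.inner_apply, WithLp.equiv_symm_apply, PiLp.toLp_apply, RCLike.inner_apply,
    conj_trivial]
  exact Finset.sum_congr rfl fun i _ => mul_comm _ _


end AuxForStatement4

/-- Lemma 8: existence of a good one-dimensional projection. -/
theorem statement_4 (N dx : ℕ) (hN : 1 ≤ N) (hdx : 1 ≤ dx)
    (X : Finset (Fin dx → ℝ)) (hcard : X.card = N) :
    ∃ u : Fin dx → ℝ, eNorm u = 1 ∧
      ∀ x ∈ X, ∀ x' ∈ X,
        (1 / (N : ℝ) ^ 2) * Real.sqrt (8 / (Real.pi * dx)) * eNorm (x - x') ≤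
            |eDot u (x - x')| ∧
          |eDot u (x - x')| ≤ eNorm (x - x') := by
  obtain ⟨n, rfl⟩ : ∃ n, dx = n + 1 := ⟨dx - 1, (Nat.succ_pred_eq_of_pos hdx).symm⟩
  classical
  set em : (Fin (n+1) → ℝ) ↪ EuclideanSpace ℝ (Fin (n+1)) :=
    ⟨(WithLp.equiv 2 (Fin (n+1) → ℝ)).symm, Equiv.injective _⟩ with hem
  obtain ⟨u, hu1, hu2⟩ := aux_key N n hN (X.map em) (by rw [Finset.card_map, hcard])
  refine ⟨WithLp.equiv 2 (Fin (n+1) → ℝ) u, ?_, ?_⟩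
  · rw [aux_eNorm]
    simpa using hu1
  · intro x hx x' hx'
    have hmem : em x ∈ X.map em := Finset.mem_map_of_mem em hx
    have hmem' : em x' ∈ X.map em := Finset.mem_map_of_mem em hx'
    have h := hu2 (em x) hmem (em x') hmem'
    have hsub : (WithLp.equiv 2 (Fin (n+1) → ℝ)).symm (x - x') = em x - em x' := by
      rw [hem]
      simp only [Function.Embedding.coeFn_mk]
      exact WithLp.toLp_sub (p := 2) x x'
    have hD : eDot (WithLp.equiv 2 (Fin (n+1) → ℝ) u) (x - x') = (inner ℝ u (em x - em x') : ℝ) := by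
      rw [aux_eDot, Equiv.symm_apply_apply, hsub]
    have hNrm : eNorm (x - x') = ‖em x - em x'‖ := by
      rw [aux_eNorm, hsub]
    have hcast : ((↑(n+1) : ℝ)) = (n:ℝ) + 1 := by push_cast; ring
    constructor
    · rw [hD, hNrm, hcast]
      exact h
    · rw [hD, hNrm]
      calc |(inner ℝ u (em x - em x') : ℝ)| ≤ ‖u‖ * ‖em x - em x'‖ := abs_real_inner_le_norm _ _
        _ = ‖em x - em x'‖ := by rw [hu1, one_mul]
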